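/- The matrices u = [[1,1],[1,0]] and v = [[0,1],[1,g]] over F₄ (g a generator of F₄ˣ) generate SL₂(F₄). -/
import Mathlib

noncomputable section

abbrev F := GaloisField 2 2
abbrev SL2 := Matrix.SpecialLinearGroup (Fin 2) F

noncomputable def TR (a : F) : SL2 := ⟨!![1,a;0,1], by simp [Matrix.det_fin_two_of]⟩
noncomputable def TL (a : F) : SL2 := ⟨!![1,0;a,1], by simp [Matrix.det_fin_two_of]⟩

end

set_option maxHeartbeats 2000000 in
theorem stmt_17 (g : (GaloisField 2 2)ˣ)
    (hg : ∀ x : (GaloisField 2 2)ˣ, x ∈ Subgroup.zpowers g)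
    (u v : Matrix.SpecialLinearGroup (Fin 2) (GaloisField 2 2))
    (hu : (u : Matrix (Fin 2) (Fin 2) (GaloisField 2 2)) = !![1, 1; 1, 0])
    (hv : (v : Matrix (Fin 2) (Fin 2) (GaloisField 2 2)) = !![0, 1; 1, (g : GaloisField 2 2)]) :
    Subgroup.closure {u, v} = ⊤ := by
  -- characteristic 2
  have h2 : (2 : F) = 0 := by exact_mod_cast CharP.cast_eq_zero F 2
  -- g has order 3 and satisfies g^2 + g + 1 = 0
  have hcard : Nat.card F = 4 := by
    have := GaloisField.card 2 2 (by norm_num); simpa using this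
  have hord : orderOf g = 3 := by
    rw [orderOf_eq_card_of_forall_mem_zpowers hg, Nat.card_units, hcard]
  have hg3 : (g : F) ^ 3 = 1 := by
    have := pow_orderOf_eq_one g
    rw [hord] at this
    have h := congrArg (Units.val) this
    push_cast at h
    simpa using h
  have hgne : (g : F) ≠ 1 := by
    intro h
    have hd : orderOf g ∣ 1 := by
      apply orderOf_dvd_of_pow_eq_one; ext; simpa using h
    rw [hord] at hd
    omega
  have hgg : (g : F) ^ 2 + (g : F) + 1 = 0 := by
    have hfac : ((g : F) + 1) * ((g : F) ^ 2 + (g : F) + 1) = 0 := by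
      linear_combination hg3 + (g : F) ^ 2 * h2 + (g : F) * h2 + h2
    rcases mul_eq_zero.mp hfac with h | h
    · exfalso; apply hgne; linear_combination h - h2
    · exact h
  -- every element of F is 0, 1, g or g+1
  have hcases : ∀ x : F, x = 0 ∨ x = 1 ∨ x = (g : F) ∨ x = (g : F) + 1 := by
    intro x
    have : Fintype F := Fintype.ofFinite _
    have hx4 : x ^ 4 = x := by
      have hc : Fintype.card F = 4 := by rw [← Nat.card_eq_fintype_card]; exact hcard
      have := FiniteField.pow_card x
      rwa [hc] at this
    have hfac : x * (x + 1) * (x + (g : F)) * (x + (g : F) + 1) = 0 := by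
      linear_combination (x + x^2) * hgg + (x^2*(g:F) + x^3 + x^3*(g:F)) * h2 + hx4
    rcases mul_eq_zero.mp hfac with h | h
    · rcases mul_eq_zero.mp h with h | h
      · rcases mul_eq_zero.mp h with h | h
        · exact Or.inl h
        · refine Or.inr (Or.inl ?_); linear_combination h - h2
      · right; right; left; linear_combination h - (g:F) * h2
    · right; right; right; linear_combination h - ((g:F)+1) * h2
  set H := Subgroup.closure ({u, v} : Set SL2) with hH
  have huH : u ∈ H := Subgroup.subset_closure (by simp)
  have hvH : v ∈ H := Subgroup.subset_closure (by simp)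
  -- transvection identities
  have hR1 : TR 1 = v*u*u*v*v*u*u*v*v := by
    apply Subtype.ext
    show (!![1,1;0,1] : Matrix (Fin 2) (Fin 2) F) = _
    simp only [Matrix.SpecialLinearGroup.coe_mul, hu, hv]
    ext i j
    fin_cases i <;> fin_cases j
    · simp [Matrix.mul_apply, Fin.sum_univ_two]
      linear_combination (-2 - (g:F)) * hgg + (-(g:F)) * h2
    · simp [Matrix.mul_apply, Fin.sum_univ_two]
      linear_combination (-3 - 2*(g:F) - (g:F)^2) * hgg + (1:F) * h2
    · simp [Matrix.mul_apply, Fin.sum_univ_two]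
      linear_combination (-5 - 3*(g:F) - (g:F)^2) * hgg + (-(g:F)) * h2
    · simp [Matrix.mul_apply, Fin.sum_univ_two]
      linear_combination (-4 - 6*(g:F) - 3*(g:F)^2 - (g:F)^3) * hgg + (1:F) * h2
  have hRg : TR (g : F) = u*u*v*v*u*u*v*v*u := by
    apply Subtype.ext
    show (!![1,(g:F);0,1] : Matrix (Fin 2) (Fin 2) F) = _
    simp only [Matrix.SpecialLinearGroup.coe_mul, hu, hv]
    ext i j
    fin_cases i <;> fin_cases j
    · simp [Matrix.mul_apply, Fin.sum_univ_two]
      linear_combination (-7 - 4*(g:F) - (g:F)^2) * hgg + (-2*(g:F)) * h2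
    · simp [Matrix.mul_apply, Fin.sum_univ_two]
      linear_combination (-3 - (g:F)) * hgg + (-1 - (g:F)) * h2
    · simp [Matrix.mul_apply, Fin.sum_univ_two]
      linear_combination (-5 - 3*(g:F) - (g:F)^2) * hgg + (-(g:F)) * h2
    · simp [Matrix.mul_apply, Fin.sum_univ_two]
      linear_combination (-2 - (g:F)) * hgg + (-(g:F)) * h2
  have hRh : TR ((g : F) + 1) = u*v := by
    apply Subtype.ext
    show (!![1,(g:F)+1;0,1] : Matrix (Fin 2) (Fin 2) F) = _
    simp only [Matrix.SpecialLinearGroup.coe_mul, hu, hv]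
    ext i j
    fin_cases i <;> fin_cases j <;> simp [Matrix.mul_apply, Fin.sum_univ_two] <;> ring
  have hL1 : TL 1 = v*v*u*u*v*v*u*u*v := by
    apply Subtype.ext
    show (!![1,0;1,1] : Matrix (Fin 2) (Fin 2) F) = _
    simp only [Matrix.SpecialLinearGroup.coe_mul, hu, hv]
    ext i j
    fin_cases i <;> fin_cases j
    · simp [Matrix.mul_apply, Fin.sum_univ_two]
      linear_combination (-2 - (g:F)) * hgg + (-(g:F)) * h2
    · simp [Matrix.mul_apply, Fin.sum_univ_two]
      linear_combination (-5 - 3*(g:F) - (g:F)^2) * hgg + (-(g:F)) * h2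
    · simp [Matrix.mul_apply, Fin.sum_univ_two]
      linear_combination (-3 - 2*(g:F) - (g:F)^2) * hgg + (1:F) * h2
    · simp [Matrix.mul_apply, Fin.sum_univ_two]
      linear_combination (-4 - 6*(g:F) - 3*(g:F)^2 - (g:F)^3) * hgg + (1:F) * h2
  have hLg : TL (g : F) = u*v*v*u*u*v*v*u*u := by
    apply Subtype.ext
    show (!![1,0;(g:F),1] : Matrix (Fin 2) (Fin 2) F) = _
    simp only [Matrix.SpecialLinearGroup.coe_mul, hu, hv]
    ext i j
    fin_cases i <;> fin_cases j
    · simp [Matrix.mul_apply, Fin.sum_univ_two]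
      linear_combination (-7 - 4*(g:F) - (g:F)^2) * hgg + (-2*(g:F)) * h2
    · simp [Matrix.mul_apply, Fin.sum_univ_two]
      linear_combination (-5 - 3*(g:F) - (g:F)^2) * hgg + (-(g:F)) * h2
    · simp [Matrix.mul_apply, Fin.sum_univ_two]
      linear_combination (-3 - (g:F)) * hgg + (-1 - (g:F)) * h2
    · simp [Matrix.mul_apply, Fin.sum_univ_two]
      linear_combination (-2 - (g:F)) * hgg + (-(g:F)) * h2
  have hLh : TL ((g : F) + 1) = v*u := by
    apply Subtype.ext
    show (!![1,0;(g:F)+1,1] : Matrix (Fin 2) (Fin 2) F) = _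
    simp only [Matrix.SpecialLinearGroup.coe_mul, hu, hv]
    ext i j
    fin_cases i <;> fin_cases j <;> simp [Matrix.mul_apply, Fin.sum_univ_two] <;> ring
  have hTR0 : TR 0 = 1 := by
    apply Subtype.ext
    simp only [Matrix.SpecialLinearGroup.coe_one, Matrix.one_fin_two]
    rfl
  have hTL0 : TL 0 = 1 := by
    apply Subtype.ext
    simp only [Matrix.SpecialLinearGroup.coe_one, Matrix.one_fin_two]
    rfl
  -- all transvections are in H
  have hTR : ∀ a : F, TR a ∈ H := by
    intro a
    rcases hcases a with rfl | rfl | rfl | rfl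
    · rw [hTR0]; exact one_mem H
    · rw [hR1]
      exact mul_mem (mul_mem (mul_mem (mul_mem (mul_mem (mul_mem (mul_mem (mul_mem hvH huH) huH) hvH) hvH) huH) huH) hvH) hvH
    · rw [hRg]
      exact mul_mem (mul_mem (mul_mem (mul_mem (mul_mem (mul_mem (mul_mem (mul_mem huH huH) hvH) hvH) huH) huH) hvH) hvH) huH
    · rw [hRh]; exact mul_mem huH hvH
  have hTL : ∀ a : F, TL a ∈ H := by
    intro a
    rcases hcases a with rfl | rfl | rfl | rfl
    · rw [hTL0]; exact one_mem H
    · rw [hL1]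
      exact mul_mem (mul_mem (mul_mem (mul_mem (mul_mem (mul_mem (mul_mem (mul_mem hvH hvH) huH) huH) hvH) hvH) huH) huH) hvH
    · rw [hLg]
      exact mul_mem (mul_mem (mul_mem (mul_mem (mul_mem (mul_mem (mul_mem (mul_mem huH hvH) hvH) huH) huH) hvH) hvH) huH) huH
    · rw [hLh]; exact mul_mem hvH huH
  -- key lemma: any M with nonzero lower-left entry is in H
  have key : ∀ M : SL2, (M : Matrix (Fin 2) (Fin 2) F) 1 0 ≠ 0 → M ∈ H := by
    intro M hc
    set a := (M : Matrix (Fin 2) (Fin 2) F) 0 0 with ha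
    set b := (M : Matrix (Fin 2) (Fin 2) F) 0 1 with hb
    set c := (M : Matrix (Fin 2) (Fin 2) F) 1 0 with hcc
    set d := (M : Matrix (Fin 2) (Fin 2) F) 1 1 with hd
    have hdet : a * d - b * c = 1 := by
      have := M.2
      rw [Matrix.det_fin_two] at this
      exact this
    have hM : M = TR ((a+1)*c⁻¹) * TL c * TR ((d+1)*c⁻¹) := by
      apply Subtype.ext
      simp only [Matrix.SpecialLinearGroup.coe_mul]
      show _ = (!![1,(a+1)*c⁻¹;0,1] * !![1,0;c,1] * !![1,(d+1)*c⁻¹;0,1] : Matrix (Fin 2) (Fin 2) F)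
      ext i j
      fin_cases i <;> fin_cases j
      · show a = _
        simp [Matrix.mul_apply, Fin.sum_univ_two]
        field_simp
        linear_combination -h2
      · show b = _
        simp [Matrix.mul_apply, Fin.sum_univ_two]
        field_simp
        linear_combination -hdet + (-2 - a - d) * h2
      · show c = _
        simp [Matrix.mul_apply, Fin.sum_univ_two]
      · show d = _
        simp [Matrix.mul_apply, Fin.sum_univ_two]
        field_simp
        linear_combination -h2
    rw [hM]
    exact mul_mem (mul_mem (hTR _) (hTL _)) (hTR _)
  -- conclude
  rw [eq_top_iff]
  intro M _
  by_cases hc : (M : Matrix (Fin 2) (Fin 2) F) 1 0 = 0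
  · have hdet : (M : Matrix (Fin 2) (Fin 2) F) 0 0 * (M : Matrix (Fin 2) (Fin 2) F) 1 1 = 1 := by
      have := M.2
      rw [Matrix.det_fin_two] at this
      rw [hc] at this
      linear_combination this
    have ha : (M : Matrix (Fin 2) (Fin 2) F) 0 0 ≠ 0 := left_ne_zero_of_mul_eq_one hdet
    have hTL1sq : TL 1 * TL 1 = 1 := by
      apply Subtype.ext
      simp only [Matrix.SpecialLinearGroup.coe_mul]
      show (!![1,0;1,1] * !![1,0;1,1] : Matrix (Fin 2) (Fin 2) F) = _
      ext i j
      fin_cases i <;> fin_cases j <;>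
        simp [Matrix.mul_apply, Fin.sum_univ_two, Matrix.one_apply] <;>
        linear_combination h2
    have hentry : ((TL 1 * M : SL2) : Matrix (Fin 2) (Fin 2) F) 1 0 ≠ 0 := by
      simp only [Matrix.SpecialLinearGroup.coe_mul]
      show (!![1,0;1,1] * (M : Matrix (Fin 2) (Fin 2) F) : Matrix (Fin 2) (Fin 2) F) 1 0 ≠ 0
      simp [Matrix.mul_apply, Fin.sum_univ_two, hc]
      exact ha
    have hmem := key _ hentry
    have : M = TL 1 * (TL 1 * M) := by rw [← mul_assoc, hTL1sq, one_mul]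
    rw [this]
    exact mul_mem (hTL 1) hmem
  · exact key M hc
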